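/- Let U = {(x,y,y₁,y₂,z) ∈ ℝ⁵ : y₂ ≠ 0}, X₁ = ∂/∂y₂, X₂ = ∂/∂x + y₁ ∂/∂y + y₂ ∂/∂y₁ + (y + y₂^{1/3}) ∂/∂z, and define the vector fields S₁ = x ∂/∂y + ∂/∂y₁ + (1/2)x² ∂/∂z, S₄ = ∂/∂x, S₅ = ∂/∂y + x ∂/∂z, S₆ = ∂/∂z. Then on U each of S₁, S₄, S₅, S₆ commutes with both X₁ and X₂: [Sᵢ, X₁] = 0 and [Sᵢ, X₂] = 0 for i ∈ {1,4,5,6}. In particular, S₁, S₄, S₅, S₆ are infinitesimal symmetries of the Monge distribution of z' = y + (y'')^{1/3}. -/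

import Mathlib

/-- Lie bracket of vector fields on ℝ⁵, `[V,W](p) = DW(p)(V(p)) − DV(p)(W(p))`. -/
noncomputable def lieBracket (V W : (Fin 5 → ℝ) → (Fin 5 → ℝ)) :
    (Fin 5 → ℝ) → (Fin 5 → ℝ) :=
  fun p => fderiv ℝ W p (V p) - fderiv ℝ V p (W p)

/-- The real odd cube root: `cbrt t = sign(t) · |t|^(1/3)`. -/
noncomputable def cbrt (t : ℝ) : ℝ := Real.sign t * |t| ^ ((1 : ℝ) / 3)

/-- `X₁ = ∂/∂y₂`, coordinates `(x, y, y₁, y₂, z) = (p 0, p 1, p 2, p 3, p 4)`. -/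
noncomputable def X₁ : (Fin 5 → ℝ) → (Fin 5 → ℝ) := fun _ => ![0, 0, 0, 1, 0]

/-- `X₂ = ∂/∂x + y₁ ∂/∂y + y₂ ∂/∂y₁ + (y + y₂^{1/3}) ∂/∂z`. -/
noncomputable def X₂ : (Fin 5 → ℝ) → (Fin 5 → ℝ) :=
  fun p => ![1, p 2, p 3, 0, p 1 + cbrt (p 3)]

/-- `S₁ = x ∂/∂y + ∂/∂y₁ + (1/2)x² ∂/∂z`. -/
noncomputable def S₁ : (Fin 5 → ℝ) → (Fin 5 → ℝ) :=
  fun p => ![0, p 0, 1, 0, (1 / 2) * (p 0) ^ 2]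

/-- `S₄ = ∂/∂x`. -/
noncomputable def S₄ : (Fin 5 → ℝ) → (Fin 5 → ℝ) := fun _ => ![1, 0, 0, 0, 0]

/-- `S₅ = ∂/∂y + x ∂/∂z`. -/
noncomputable def S₅ : (Fin 5 → ℝ) → (Fin 5 → ℝ) := fun p => ![0, 1, 0, 0, p 0]

/-- `S₆ = ∂/∂z`. -/
noncomputable def S₆ : (Fin 5 → ℝ) → (Fin 5 → ℝ) := fun _ => ![0, 0, 0, 0, 1]

lemma cbrt_hasDerivAt {t : ℝ} (ht : t ≠ 0) : ∃ c : ℝ, HasDerivAt cbrt c t := by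
  rcases ht.lt_or_gt with h | h
  · refine ⟨_, HasDerivAt.congr_of_eventuallyEq
      (((Real.hasDerivAt_rpow_const (x := -t) (p := (1:ℝ)/3)
        (Or.inl (neg_ne_zero.mpr ht))).comp t (hasDerivAt_neg t)).neg) ?_⟩
    filter_upwards [Iio_mem_nhds h] with s hs
    rw [Set.mem_Iio] at hs
    simp only [cbrt, Real.sign_of_neg hs, abs_of_neg hs, Function.comp, Pi.neg_apply, Function.comp_apply]
    ring
  · refine ⟨_, HasDerivAt.congr_of_eventuallyEq
      (Real.hasDerivAt_rpow_const (x := t) (p := (1:ℝ)/3) (Or.inl ht)) ?_⟩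
    filter_upwards [Ioi_mem_nhds h] with s hs
    rw [Set.mem_Ioi] at hs
    simp [cbrt, Real.sign_of_pos hs, abs_of_pos hs]

/-- `S₁, S₄, S₅, S₆` commute with `X₁` and `X₂` on `U = {y₂ ≠ 0}`; in particular they
are infinitesimal symmetries of the Monge distribution of `z' = y + (y'')^{1/3}`. -/
theorem symmetries_S₁_S₄_S₅_S₆ :
    ∀ p : Fin 5 → ℝ, p 3 ≠ 0 →
      lieBracket S₁ X₁ p = 0 ∧ lieBracket S₁ X₂ p = 0 ∧
      lieBracket S₄ X₁ p = 0 ∧ lieBracket S₄ X₂ p = 0 ∧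
      lieBracket S₅ X₁ p = 0 ∧ lieBracket S₅ X₂ p = 0 ∧
      lieBracket S₆ X₁ p = 0 ∧ lieBracket S₆ X₂ p = 0 := by
  intro p hp
  obtain ⟨c, hc⟩ := cbrt_hasDerivAt hp
  set pr : Fin 5 → ((Fin 5 → ℝ) →L[ℝ] ℝ) := fun i => ContinuousLinearMap.proj i with hpr
  -- derivative of X₂
  have hX₂ : HasFDerivAt X₂ (ContinuousLinearMap.pi ![0, pr 2, pr 3, 0, pr 1 + c • pr 3]) p := by
    rw [hasFDerivAt_pi']
    intro i
    fin_cases i <;>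
      simp only [X₂, ContinuousLinearMap.proj_pi, Matrix.cons_val_zero, Matrix.cons_val_one,
        Matrix.head_cons, Matrix.cons_val_two, Matrix.tail_cons, Matrix.cons_val_three,
        Matrix.cons_val_four, Fin.isValue, hpr]
    · exact hasFDerivAt_const 1 p
    · exact hasFDerivAt_apply 2 p
    · exact hasFDerivAt_apply 3 p
    · exact hasFDerivAt_const 0 p
    · exact (hasFDerivAt_apply 1 p).add (hc.comp_hasFDerivAt (f := fun x : Fin 5 → ℝ => x 3) p (hasFDerivAt_apply 3 p))
  -- derivative of S₁
  have hS₁ : HasFDerivAt S₁ (ContinuousLinearMap.pi ![0, pr 0, 0, 0, p 0 • pr 0]) p := by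
    rw [hasFDerivAt_pi']
    intro i
    fin_cases i <;>
      simp only [S₁, ContinuousLinearMap.proj_pi, Matrix.cons_val_zero, Matrix.cons_val_one,
        Matrix.head_cons, Matrix.cons_val_two, Matrix.tail_cons, Matrix.cons_val_three,
        Matrix.cons_val_four, Fin.isValue, hpr]
    · exact hasFDerivAt_const 0 p
    · exact hasFDerivAt_apply 0 p
    · exact hasFDerivAt_const 1 p
    · exact hasFDerivAt_const 0 p
    · have h1 : HasDerivAt (fun x : ℝ => (1/2 : ℝ) * x ^ 2) (p 0) (p 0) := by
        have := (hasDerivAt_pow 2 (p 0)).const_mul (1/2 : ℝ)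
        simpa using this.congr_deriv (by push_cast; ring)
      exact h1.comp_hasFDerivAt (f := fun x : Fin 5 → ℝ => x 0) p (hasFDerivAt_apply 0 p)
  -- derivative of S₅
  have hS₅ : HasFDerivAt S₅ (ContinuousLinearMap.pi ![0, 0, 0, 0, pr 0]) p := by
    rw [hasFDerivAt_pi']
    intro i
    fin_cases i <;>
      simp only [S₅, ContinuousLinearMap.proj_pi, Matrix.cons_val_zero, Matrix.cons_val_one,
        Matrix.head_cons, Matrix.cons_val_two, Matrix.tail_cons, Matrix.cons_val_three,
        Matrix.cons_val_four, Fin.isValue, hpr]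
    · exact hasFDerivAt_const 0 p
    · exact hasFDerivAt_const 1 p
    · exact hasFDerivAt_const 0 p
    · exact hasFDerivAt_const 0 p
    · exact hasFDerivAt_apply 0 p
  have hX₁ : fderiv ℝ X₁ p = 0 := by
    rw [show X₁ = fun _ : Fin 5 → ℝ => ![0,0,0,1,0] from rfl]; exact fderiv_const_apply _
  have hS₄ : fderiv ℝ S₄ p = 0 := by
    rw [show S₄ = fun _ : Fin 5 → ℝ => ![1,0,0,0,0] from rfl]; exact fderiv_const_apply _
  have hS₆ : fderiv ℝ S₆ p = 0 := by
    rw [show S₆ = fun _ : Fin 5 → ℝ => ![0,0,0,0,1] from rfl]; exact fderiv_const_apply _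
  refine ⟨?_, ?_, ?_, ?_, ?_, ?_, ?_, ?_⟩ <;>
    simp only [lieBracket, hX₁, hS₄, hS₆, hX₂.fderiv, hS₁.fderiv, hS₅.fderiv] <;>
    funext i <;> fin_cases i <;>
    simp [X₁, X₂, S₁, S₄, S₅, S₆, hpr, Matrix.cons_val_zero, Matrix.cons_val_one]
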